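/- Let K be a field. Let V be a 4-dimensional K-vector space with basis v₁, v₂, a₁, a₂ and operators P, Q given by P(v₁)=a₁, P(v₂)=a₂, P(a₁)=P(a₂)=0, Q=0. Let W be a 4-dimensional K-vector space with basis w₁, w₂, b₁, b₂ and operators S, T given by S(w₁)=b₁, T(w₁)=b₂ and zero on the other basis vectors. Then the associated Lie algebras L_V = K⟨P,Q⟩ ⋉ V and L_W = K⟨S,T⟩ ⋉ W are isomorphic as Lie algebras, via the linear map sending P ↦ −w₁, Q ↦ −w₂, v₁ ↦ S, v₂ ↦ T, a₁ ↦ b₁, a₂ ↦ b₂. -/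

import Mathlib

/-- The bracket of the semidirect product `L_V = K⟨P,Q⟩ ⋉ V` on `(K × K) × V`. -/
def lieBk {K V : Type*} [Field K] [AddCommGroup V] [Module K V]
    (P Q : V →ₗ[K] V) (a b : (K × K) × V) : (K × K) × V :=
  (0, (a.1.1 • P + a.1.2 • Q) b.2 - (b.1.1 • P + b.1.2 • Q) a.2)

noncomputable def fmap {K V W : Type*} [Field K] [AddCommGroup V] [Module K V]
    [AddCommGroup W] [Module K W]
    (b : Module.Basis (Fin 4) K V) (c : Module.Basis (Fin 4) K W) :
    ((K × K) × V) →ₗ[K] ((K × K) × W) where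
  toFun p := ((b.repr p.2 0, b.repr p.2 1),
    (-p.1.1) • c 0 + (-p.1.2) • c 1 + b.repr p.2 2 • c 2 + b.repr p.2 3 • c 3)
  map_add' x y := by
    simp only [Prod.fst_add, Prod.snd_add, map_add, Finsupp.add_apply, Prod.mk_add_mk,
      Prod.mk.injEq]
    exact ⟨trivial, by module⟩
  map_smul' t x := by
    simp only [Prod.smul_fst, Prod.smul_snd, map_smul, Finsupp.smul_apply, RingHom.id_apply,
      Prod.smul_mk, Prod.mk.injEq, smul_eq_mul]
    exact ⟨trivial, by module⟩

noncomputable def gmap {K V W : Type*} [Field K] [AddCommGroup V] [Module K V]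
    [AddCommGroup W] [Module K W]
    (b : Module.Basis (Fin 4) K V) (c : Module.Basis (Fin 4) K W) :
    ((K × K) × W) →ₗ[K] ((K × K) × V) where
  toFun p := ((-(c.repr p.2 0), -(c.repr p.2 1)),
    p.1.1 • b 0 + p.1.2 • b 1 + c.repr p.2 2 • b 2 + c.repr p.2 3 • b 3)
  map_add' x y := by
    simp only [Prod.fst_add, Prod.snd_add, map_add, Finsupp.add_apply, Prod.mk_add_mk,
      Prod.mk.injEq]
    constructor
    · constructor <;> ring
    · module
  map_smul' t x := by
    simp only [Prod.smul_fst, Prod.smul_snd, map_smul, Finsupp.smul_apply, RingHom.id_apply,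
      Prod.smul_mk, Prod.mk.injEq, smul_eq_mul]
    constructor
    · constructor <;> ring
    · module

theorem stmt_9 {K V W : Type*} [Field K] [AddCommGroup V] [Module K V]
    [AddCommGroup W] [Module K W]
    (b : Module.Basis (Fin 4) K V) (c : Module.Basis (Fin 4) K W)
    (P Q : V →ₗ[K] V) (S T : W →ₗ[K] W)
    (hP0 : P (b 0) = b 2) (hP1 : P (b 1) = b 3) (hP2 : P (b 2) = 0) (hP3 : P (b 3) = 0)
    (hQ : Q = 0)
    (hS0 : S (c 0) = c 2) (hS1 : S (c 1) = 0) (hS2 : S (c 2) = 0) (hS3 : S (c 3) = 0)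
    (hT0 : T (c 0) = c 3) (hT1 : T (c 1) = 0) (hT2 : T (c 2) = 0) (hT3 : T (c 3) = 0) :
    ∃ ψ : ((K × K) × V) ≃ₗ[K] ((K × K) × W),
      (∀ a b', ψ (lieBk P Q a b') = lieBk S T (ψ a) (ψ b')) ∧
      ψ (((1 : K), (0 : K)), (0 : V)) = (0, -c 0) ∧
      ψ (((0 : K), (1 : K)), (0 : V)) = (0, -c 1) ∧
      ψ (0, b 0) = (((1 : K), (0 : K)), (0 : W)) ∧
      ψ (0, b 1) = (((0 : K), (1 : K)), (0 : W)) ∧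
      ψ (0, b 2) = (0, c 2) ∧
      ψ (0, b 3) = (0, c 3) := by
  have hbv : ∀ v : V, b.repr v 0 • b 0 + b.repr v 1 • b 1 + b.repr v 2 • b 2
      + b.repr v 3 • b 3 = v := by
    intro v
    have := b.sum_repr v
    rw [Fin.sum_univ_four] at this
    linear_combination (norm := module) this
  have hcw : ∀ w : W, c.repr w 0 • c 0 + c.repr w 1 • c 1 + c.repr w 2 • c 2
      + c.repr w 3 • c 3 = w := by
    intro w
    have := c.sum_repr w
    rw [Fin.sum_univ_four] at this
    linear_combination (norm := module) this
  have hPv : ∀ v : V, P v = b.repr v 0 • b 2 + b.repr v 1 • b 3 := by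
    intro v
    conv_lhs => rw [← hbv v]
    simp [hP0, hP1, hP2, hP3]
  have hSw : ∀ w : W, S w = c.repr w 0 • c 2 := by
    intro w
    conv_lhs => rw [← hcw w]
    simp [hS0, hS1, hS2, hS3]
  have hTw : ∀ w : W, T w = c.repr w 0 • c 3 := by
    intro w
    conv_lhs => rw [← hcw w]
    simp [hT0, hT1, hT2, hT3]
  refine ⟨LinearEquiv.ofLinear (fmap b c) (gmap b c) ?_ ?_, ?_, ?_, ?_, ?_, ?_, ?_⟩
  · apply LinearMap.ext
    intro p
    obtain ⟨⟨x, y⟩, w⟩ := p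
    simp only [LinearMap.comp_apply, fmap, gmap, LinearMap.coe_mk, AddHom.coe_mk,
      LinearMap.id_apply, map_add, map_smul, map_neg, Finsupp.coe_add, Finsupp.coe_smul,
      Finsupp.coe_neg, Module.Basis.repr_self, Pi.add_apply, Pi.smul_apply, Pi.neg_apply,
      Finsupp.single_apply, smul_eq_mul, Prod.mk.injEq]
    simp
    exact hcw w
  · apply LinearMap.ext
    intro p
    obtain ⟨⟨x, y⟩, v⟩ := p
    simp only [LinearMap.comp_apply, fmap, gmap, LinearMap.coe_mk, AddHom.coe_mk,
      LinearMap.id_apply, map_add, map_smul, map_neg, Finsupp.coe_add, Finsupp.coe_smul,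
      Finsupp.coe_neg, Module.Basis.repr_self, Pi.add_apply, Pi.smul_apply, Pi.neg_apply,
      Finsupp.single_apply, smul_eq_mul, Prod.mk.injEq]
    simp
    exact hbv v
  · intro a b'
    simp only [lieBk, hQ, LinearEquiv.ofLinear_apply, fmap, LinearMap.coe_mk, AddHom.coe_mk,
      smul_zero, add_zero, LinearMap.add_apply, LinearMap.smul_apply, LinearMap.zero_apply,
      hPv a.2, hPv b'.2, hSw, hTw]
    simp only [map_add, map_sub, map_smul, map_neg, Finsupp.coe_add, Finsupp.coe_smul,
      Finsupp.coe_sub, Finsupp.coe_neg, Module.Basis.repr_self, Pi.add_apply, Pi.sub_apply,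
      Pi.smul_apply, Pi.neg_apply, Finsupp.single_apply, smul_eq_mul, Prod.mk.injEq]
    simp
    module
  all_goals
    simp [LinearEquiv.ofLinear_apply, fmap, Module.Basis.repr_self, Finsupp.single_apply]
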